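/- Semishortening admissibility: let ≺ be any antireflexive binary relation on terms. If Γ ⇒ F{v/r} has a cut-free semishortening derivation in EQ₁₂ (the calculus with all four equality rules =₁, =₂, =₁ˡ, =₂ˡ), then for every term s both Γ, r=s ⇒ F{v/s} and Γ, s=r ⇒ F{v/s} have cut-free semishortening derivations in EQ₁₂. -/

import Mathlib

inductive Tm : Type
  | var : Nat → Tm
  | const : Nat → Tm
  | app : Nat → Tm → Tm

def Tm.subst (v : Nat) (r : Tm) : Tm → Tm
  | .var w => if w = v then r else .var w
  | .const c => .const c
  | .app f t => .app f (Tm.subst v r t)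

def Tm.count (v : Nat) : Tm → Nat
  | .var w => if w = v then 1 else 0
  | .const _ => 0
  | .app _ t => t.count v

inductive Fml : Type
  | eq : Tm → Tm → Fml
  | atom : Nat → Tm → Fml
  | imp : Fml → Fml → Fml
  | and : Fml → Fml → Fml
  | or : Fml → Fml → Fml
  | neg : Fml → Fml
  | all : Nat → Fml → Fml
  | ex : Nat → Fml → Fml

def Fml.subst (v : Nat) (r : Tm) : Fml → Fml
  | .eq t u => .eq (Tm.subst v r t) (Tm.subst v r u)
  | .atom p t => .atom p (Tm.subst v r t)
  | .imp A B => .imp (Fml.subst v r A) (Fml.subst v r B)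
  | .and A B => .and (Fml.subst v r A) (Fml.subst v r B)
  | .or A B => .or (Fml.subst v r A) (Fml.subst v r B)
  | .neg A => .neg (Fml.subst v r A)
  | .all x A => .all x (if x = v then A else Fml.subst v r A)
  | .ex x A => .ex x (if x = v then A else Fml.subst v r A)

def Fml.count (v : Nat) : Fml → Nat
  | .eq t u => t.count v + u.count v
  | .atom _ t => t.count v
  | .imp A B => A.count v + B.count v
  | .and A B => A.count v + B.count v
  | .or A B => A.count v + B.count v
  | .neg A => A.count v
  | .all x A => if x = v then 0 else A.count v
  | .ex x A => if x = v then 0 else A.count v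

/-- Tags for the equality rules of the equational sequent calculi. -/
inductive EqRule | r1 | r2 | l1 | l2 | cng
  deriving DecidableEq

/-- Derivability in the equational sequent calculus.  Sequents have the form
`Γ ⇒ F` with `Γ : List Fml` and `F : Fml`.  The calculus has logical axioms
`F ⇒ F`, reflexivity axioms `⇒ t = t`, the weak left structural rules
(weakening, exchange, contraction), the cut rule (enabled when `cut = true`),
and the equality rules `=₁`, `=₂`, `=₁ˡ`, `=₂ˡ` and `CNG`, each guarded by the
side condition `ok tag F v r s` (where `F` is the changing formula, `v` the
substituted variable and `r`, `s` the terms involved). -/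
inductive Der (ok : EqRule → Fml → Nat → Tm → Tm → Prop) (cut : Bool) :
    List Fml → Fml → Prop
  | ax (F : Fml) : Der ok cut [F] F
  | refl (t : Tm) : Der ok cut [] (.eq t t)
  | wk {Γ H} (F) : Der ok cut Γ H → Der ok cut (F :: Γ) H
  | exch {Γ₁ Γ₂ F G H} : Der ok cut (Γ₁ ++ F :: G :: Γ₂) H →
      Der ok cut (Γ₁ ++ G :: F :: Γ₂) H
  | contr {Γ F H} : Der ok cut (F :: F :: Γ) H → Der ok cut (F :: Γ) H
  | cutr {Γ Λ F H} : cut = true → Der ok cut Γ F → Der ok cut (F :: Λ) H →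
      Der ok cut (Γ ++ Λ) H
  | eq1 {Γ F v r s} : ok .r1 F v r s → Der ok cut Γ (F.subst v r) →
      Der ok cut (.eq r s :: Γ) (F.subst v s)
  | eq2 {Γ F v r s} : ok .r2 F v r s → Der ok cut Γ (F.subst v r) →
      Der ok cut (.eq s r :: Γ) (F.subst v s)
  | eq1l {Γ F v r s H} : ok .l1 F v r s → Der ok cut (F.subst v r :: Γ) H →
      Der ok cut (F.subst v s :: .eq r s :: Γ) H
  | eq2l {Γ F v r s H} : ok .l2 F v r s → Der ok cut (F.subst v r :: Γ) H →
      Der ok cut (F.subst v s :: .eq s r :: Γ) H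
  | cng {Γ Λ F v r s} : ok .cng F v r s → Der ok cut Γ (F.subst v r) →
      Der ok cut Λ (.eq r s) → Der ok cut (Γ ++ Λ) (F.subst v s)

/-- The side condition allowing exactly the equality rules in `tags`,
with no further restriction. -/
def allow (tags : List EqRule) : EqRule → Fml → Nat → Tm → Tm → Prop :=
  fun t _ _ _ _ => t ∈ tags

/-- The semishortening side condition relative to `prec`: `=₁` and `=₁ˡ`
inferences must be shortening (`r ≺ s`), while `=₂` and `=₂ˡ` inferences must
be nonlengthening (`¬ s ≺ r`); `CNG` is not allowed. -/
def semiOk (prec : Tm → Tm → Prop) : EqRule → Fml → Nat → Tm → Tm → Prop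
  | .r1, _, _, r, s => prec r s
  | .l1, _, _, r, s => prec r s
  | .r2, _, _, r, s => ¬ prec s r
  | .l2, _, _, r, s => ¬ prec s r
  | .cng, _, _, _, _ => False

/- ===================== Auxiliary development ===================== -/

deriving instance DecidableEq for Tm
deriving instance DecidableEq for Fml

section Adm

open List

/-- Prepend a chain of unary function applications to a term. -/
def cat : List Nat → Tm → Tm
  | [], t => t
  | f :: p, t => .app f (cat p t)

@[simp] lemma cat_nil (t : Tm) : cat [] t = t := rfl
@[simp] lemma cat_cons (f : Nat) (p : List Nat) (t : Tm) :
    cat (f :: p) t = .app f (cat p t) := rfl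

lemma cat_append (p q : List Nat) (t : Tm) : cat (p ++ q) t = cat p (cat q t) := by
  induction p with
  | nil => rfl
  | cons f p IH => simp [IH]

/-- Length of the application chain of a term. -/
def tlen : Tm → Nat
  | .app _ t => tlen t + 1
  | _ => 0

lemma tlen_cat (p : List Nat) (t : Tm) : tlen (cat p t) = p.length + tlen t := by
  induction p with
  | nil => simp
  | cons f p IH => simp [tlen, IH]; omega

lemma cat_eq_self {w : List Nat} {t : Tm} (h : cat w t = t) : w = [] := by
  have := congrArg tlen h
  rw [tlen_cat] at this
  have : w.length = 0 := by omega
  exact List.length_eq_zero_iff.mp this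

lemma cat_inj {p q : List Nat} {t : Tm} (h : cat p t = cat q t) : p = q := by
  induction p generalizing q with
  | nil =>
    cases q with
    | nil => rfl
    | cons g q =>
      have := congrArg tlen h
      simp [tlen_cat, tlen] at this
      omega
  | cons f p IH =>
    cases q with
    | nil =>
      have := congrArg tlen h
      simp [tlen_cat, tlen] at this
      omega
    | cons g q =>
      simp only [cat_cons, Tm.app.injEq] at h
      obtain ⟨rfl, h2⟩ := h
      rw [IH h2]

/-- Suffix trichotomy for chains. -/
lemma tri {p q : List Nat} {a b : Tm} (h : cat p a = cat q b) :
    (∃ w, b = cat w a ∧ p = q ++ w) ∨ (∃ w, a = cat w b ∧ q = p ++ w) := by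
  induction p generalizing q with
  | nil =>
    right; exact ⟨q, h, (List.nil_append q).symm⟩
  | cons f p IH =>
    cases q with
    | nil => left; exact ⟨f :: p, h.symm, rfl⟩
    | cons g q =>
      simp only [cat_cons, Tm.app.injEq] at h
      obtain ⟨rfl, h2⟩ := h
      rcases IH h2 with ⟨w, hw, rfl⟩ | ⟨w, hw, rfl⟩
      · left; exact ⟨w, hw, rfl⟩
      · right; exact ⟨w, hw, rfl⟩

lemma subst_cat (v : Nat) (a : Tm) (p : List Nat) (t : Tm) :
    Tm.subst v a (cat p t) = cat p (Tm.subst v a t) := by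
  induction p with
  | nil => rfl
  | cons f p IH => simp [Tm.subst, IH]

@[simp] lemma subst_var (v : Nat) (a : Tm) : Tm.subst v a (.var v) = a := by
  simp [Tm.subst]

lemma subst_cat_var (v : Nat) (a : Tm) (p : List Nat) :
    Tm.subst v a (cat p (.var v)) = cat p a := by
  rw [subst_cat, subst_var]

/-- Either `v` does not occur in `t`, or `t` is a chain ending in `var v`. -/
lemma subst_decomp (v : Nat) : ∀ t : Tm,
    (∀ a, Tm.subst v a t = t) ∨ ∃ p, t = cat p (.var v)
  | .var w => by
    by_cases h : w = v
    · subst h; right; exact ⟨[], rfl⟩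
    · left; intro a; simp [Tm.subst, h]
  | .const c => by left; intro a; rfl
  | .app f t => by
    rcases subst_decomp v t with h | ⟨p, rfl⟩
    · left; intro a; simp [Tm.subst, h a]
    · right; exact ⟨f :: p, rfl⟩

/-- A bound on the variables of a term. -/
def tB : Tm → Nat
  | .var w => w + 1
  | .const _ => 0
  | .app _ t => tB t

lemma tsubst_noop {v : Nat} {t : Tm} (h : tB t ≤ v) (a : Tm) : Tm.subst v a t = t := by
  induction t with
  | var w =>
    simp [tB] at h
    have : ¬ (w = v) := by omega
    simp [Tm.subst, this]
  | const c => rfl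
  | app f t IH =>
    simp only [tB] at h
    simp [Tm.subst, IH h]

/-- A bound on the variables (including binders) of a formula. -/
def fB : Fml → Nat
  | .eq t u => max (tB t) (tB u)
  | .atom _ t => tB t
  | .imp A B => max (fB A) (fB B)
  | .and A B => max (fB A) (fB B)
  | .or A B => max (fB A) (fB B)
  | .neg A => fB A
  | .all x A => max (x + 1) (fB A)
  | .ex x A => max (x + 1) (fB A)

/-- Oriented replacement pairs: `(r, s, o)` replaces `r` by `s`; the hypothesis
equation is `r = s` if `o`, else `s = r`. -/
def hypF (π : Tm × Tm × Bool) : Fml :=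
  if π.2.2 then .eq π.1 π.2.1 else .eq π.2.1 π.1

def Hard (prec : Tm → Tm → Prop) (π : Tm × Tm × Bool) : Prop :=
  if π.2.2 then ¬ prec π.1 π.2.1 else prec π.2.1 π.1

/-- Replacement of suffixes `π.r ↦ π.s` (for a pair from `L`) in a term. -/
def RepT (L : List (Tm × Tm × Bool)) (t u : Tm) : Prop :=
  t = u ∨ ∃ π ∈ L, ∃ p, t = cat p π.1 ∧ u = cat p π.2.1

/-- Slotwise replacement in a formula. -/
inductive RepF (L : List (Tm × Tm × Bool)) : Fml → Fml → Prop
  | eq {t₁ t₂ u₁ u₂} : RepT L t₁ u₁ → RepT L t₂ u₂ → RepF L (.eq t₁ t₂) (.eq u₁ u₂)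
  | atom (n) {t u} : RepT L t u → RepF L (.atom n t) (.atom n u)
  | imp {A A' B B'} : RepF L A A' → RepF L B B' → RepF L (.imp A B) (.imp A' B')
  | and {A A' B B'} : RepF L A A' → RepF L B B' → RepF L (.and A B) (.and A' B')
  | or {A A' B B'} : RepF L A A' → RepF L B B' → RepF L (.or A B) (.or A' B')
  | neg {A A'} : RepF L A A' → RepF L (.neg A) (.neg A')
  | all (x) {A A'} : RepF L A A' → RepF L (.all x A) (.all x A')
  | ex (x) {A A'} : RepF L A A' → RepF L (.ex x A) (.ex x A')

lemma RepT.refl (L) (t : Tm) : RepT L t t := Or.inl rfl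

lemma RepF.refl (L) : ∀ A : Fml, RepF L A A
  | .eq t u => .eq (RepT.refl L t) (RepT.refl L u)
  | .atom n t => .atom n (RepT.refl L t)
  | .imp A B => .imp (RepF.refl L A) (RepF.refl L B)
  | .and A B => .and (RepF.refl L A) (RepF.refl L B)
  | .or A B => .or (RepF.refl L A) (RepF.refl L B)
  | .neg A => .neg (RepF.refl L A)
  | .all x A => .all x (RepF.refl L A)
  | .ex x A => .ex x (RepF.refl L A)

lemma RepT.mono {L L'} (hL : ∀ π ∈ L, π ∈ L') {t u} (h : RepT L t u) : RepT L' t u := by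
  rcases h with rfl | ⟨π, hm, p, h1, h2⟩
  · exact Or.inl rfl
  · exact Or.inr ⟨π, hL π hm, p, h1, h2⟩

lemma RepF.mono {L L'} (hL : ∀ π ∈ L, π ∈ L') {A B} (h : RepF L A B) : RepF L' A B := by
  induction h with
  | eq h1 h2 => exact .eq (h1.mono hL) (h2.mono hL)
  | atom n h1 => exact .atom n (h1.mono hL)
  | imp _ _ IH1 IH2 => exact .imp IH1 IH2
  | and _ _ IH1 IH2 => exact .and IH1 IH2
  | or _ _ IH1 IH2 => exact .or IH1 IH2
  | neg _ IH => exact .neg IH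
  | all x _ IH => exact .all x IH
  | ex x _ IH => exact .ex x IH

/-- Lifting a single-pair replacement to a substitution instance. -/
lemma liftT {π : Tm × Tm × Bool} {t u : Tm} (h : RepT [π] t u) (v : Nat) (hv : tB t ≤ v) :
    ∃ w : Tm, Tm.subst v π.1 w = t ∧ Tm.subst v π.2.1 w = u := by
  rcases h with rfl | ⟨π', hm, p, rfl, rfl⟩
  · exact ⟨t, tsubst_noop hv _, tsubst_noop hv _⟩
  · simp only [List.mem_singleton] at hm
    subst hm
    exact ⟨cat p (.var v), subst_cat_var .., subst_cat_var ..⟩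

lemma liftF {π : Tm × Tm × Bool} : ∀ {X Y : Fml}, RepF [π] X Y → ∀ v : Nat, fB X ≤ v →
    ∃ F : Fml, F.subst v π.1 = X ∧ F.subst v π.2.1 = Y := by
  intro X Y h
  induction h with
  | @eq t₁ t₂ u₁ u₂ h1 h2 =>
    intro v hv
    simp only [fB, max_le_iff] at hv
    obtain ⟨w1, hw1, hw1'⟩ := liftT h1 v hv.1
    obtain ⟨w2, hw2, hw2'⟩ := liftT h2 v hv.2
    exact ⟨.eq w1 w2, by simp [Fml.subst, hw1, hw2], by simp [Fml.subst, hw1', hw2']⟩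
  | @atom n t u h1 =>
    intro v hv
    obtain ⟨w1, hw1, hw1'⟩ := liftT h1 v hv
    exact ⟨.atom n w1, by simp [Fml.subst, hw1], by simp [Fml.subst, hw1']⟩
  | imp _ _ IH1 IH2 =>
    intro v hv
    simp only [fB, max_le_iff] at hv
    obtain ⟨F1, hF1, hF1'⟩ := IH1 v hv.1
    obtain ⟨F2, hF2, hF2'⟩ := IH2 v hv.2
    exact ⟨.imp F1 F2, by simp [Fml.subst, hF1, hF2], by simp [Fml.subst, hF1', hF2']⟩
  | and _ _ IH1 IH2 =>
    intro v hv
    simp only [fB, max_le_iff] at hv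
    obtain ⟨F1, hF1, hF1'⟩ := IH1 v hv.1
    obtain ⟨F2, hF2, hF2'⟩ := IH2 v hv.2
    exact ⟨.and F1 F2, by simp [Fml.subst, hF1, hF2], by simp [Fml.subst, hF1', hF2']⟩
  | or _ _ IH1 IH2 =>
    intro v hv
    simp only [fB, max_le_iff] at hv
    obtain ⟨F1, hF1, hF1'⟩ := IH1 v hv.1
    obtain ⟨F2, hF2, hF2'⟩ := IH2 v hv.2
    exact ⟨.or F1 F2, by simp [Fml.subst, hF1, hF2], by simp [Fml.subst, hF1', hF2']⟩
  | neg _ IH =>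
    intro v hv
    obtain ⟨F1, hF1, hF1'⟩ := IH v hv
    exact ⟨.neg F1, by simp [Fml.subst, hF1], by simp [Fml.subst, hF1']⟩
  | @all x A A' _ IH =>
    intro v hv
    simp only [fB, max_le_iff] at hv
    obtain ⟨F1, hF1, hF1'⟩ := IH v hv.2
    have hx : ¬ (x = v) := by omega
    exact ⟨.all x F1, by simp [Fml.subst, hx, hF1], by simp [Fml.subst, hx, hF1']⟩
  | @ex x A A' _ IH =>
    intro v hv
    simp only [fB, max_le_iff] at hv
    obtain ⟨F1, hF1, hF1'⟩ := IH v hv.2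
    have hx : ¬ (x = v) := by omega
    exact ⟨.ex x F1, by simp [Fml.subst, hx, hF1], by simp [Fml.subst, hx, hF1']⟩

/-- The basic bridge: a substitution instance pair is a replacement. -/
lemma bridgeT (π : Tm × Tm × Bool) (v : Nat) (t : Tm) :
    RepT [π] (Tm.subst v π.1 t) (Tm.subst v π.2.1 t) := by
  rcases subst_decomp v t with h | ⟨p, rfl⟩
  · rw [h, h]; exact Or.inl rfl
  · rw [subst_cat_var, subst_cat_var]
    exact Or.inr ⟨π, List.mem_singleton_self π, p, rfl, rfl⟩

lemma bridgeF (π : Tm × Tm × Bool) (v : Nat) : ∀ F : Fml,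
    RepF [π] (F.subst v π.1) (F.subst v π.2.1)
  | .eq t u => .eq (bridgeT π v t) (bridgeT π v u)
  | .atom n t => .atom n (bridgeT π v t)
  | .imp A B => .imp (bridgeF π v A) (bridgeF π v B)
  | .and A B => .and (bridgeF π v A) (bridgeF π v B)
  | .or A B => .or (bridgeF π v A) (bridgeF π v B)
  | .neg A => .neg (bridgeF π v A)
  | .all x A => by
    by_cases h : x = v
    · simpa [Fml.subst, h] using RepF.all x (RepF.refl _ A)
    · simpa [Fml.subst, h] using RepF.all x (bridgeF π v A)
  | .ex x A => by
    by_cases h : x = v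
    · simpa [Fml.subst, h] using RepF.ex x (RepF.refl _ A)
    · simpa [Fml.subst, h] using RepF.ex x (bridgeF π v A)

end Adm
section Adm2

open List

variable {ok : EqRule → Fml → Nat → Tm → Tm → Prop} {c : Bool}

lemma der_perm_aux {Γ Γ' : List Fml} (h : Γ.Perm Γ') :
    ∀ (Δ : List Fml) (H : Fml), Der ok c (Δ ++ Γ) H → Der ok c (Δ ++ Γ') H := by
  induction h with
  | nil => exact fun Δ H h => h
  | cons x _ IH =>
    intro Δ H h
    have := IH (Δ ++ [x]) H (by simpa using h)
    simpa using this
  | swap x y l =>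
    intro Δ H h
    exact Der.exch h
  | trans _ _ IH₁ IH₂ =>
    intro Δ H h
    exact IH₂ Δ H (IH₁ Δ H h)

lemma der_perm {Γ Γ' : List Fml} {H : Fml} (hp : Γ.Perm Γ') (h : Der ok c Γ H) :
    Der ok c Γ' H := by
  simpa using der_perm_aux hp [] H (by simpa using h)

lemma wk_all {Γ : List Fml} {H : Fml} (Θ : List Fml) (h : Der ok c Γ H) :
    Der ok c (Θ ++ Γ) H := by
  induction Θ with
  | nil => exact h
  | cons f Θ IH => exact Der.wk f IH

lemma absorb {Γ : List Fml} {H : Fml} :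
    ∀ (Θ : List Fml), (∀ f ∈ Θ, f ∈ Γ) → Der ok c (Θ ++ Γ) H → Der ok c Γ H := by
  intro Θ
  induction Θ generalizing Γ with
  | nil => exact fun _ h => h
  | cons f Θ IH =>
    intro hsub h
    have hf : f ∈ Γ := hsub f List.mem_cons_self
    have hΓ : Γ.Perm (f :: Γ.erase f) := List.perm_cons_erase hf
    have h1 : Der ok c (f :: f :: (Θ ++ Γ.erase f)) H := by
      refine der_perm ?_ h
      calc f :: Θ ++ Γ ~ f :: (Θ ++ (f :: Γ.erase f)) := by
            exact List.Perm.cons f (List.Perm.append_left Θ hΓ)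
        _ ~ f :: f :: (Θ ++ Γ.erase f) := List.Perm.cons f List.perm_middle
    have h2 := Der.contr h1
    have h3 : Der ok c (Θ ++ Γ) H := by
      refine der_perm ?_ h2
      calc f :: (Θ ++ Γ.erase f) ~ Θ ++ f :: Γ.erase f := List.perm_middle.symm
        _ ~ Θ ++ Γ := List.Perm.append_left Θ hΓ.symm
    refine IH ?_ h3
    intro g hg
    exact hsub g (List.mem_cons_of_mem f hg)

/-- From a derivation with context `out ++ Γ` where every element of `out`
occurs in `Θ ++ Γ`, get a derivation with context `Θ ++ Γ`. -/
lemma cleanup2 {Γ out Θ : List Fml} {H : Fml}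
    (h : Der ok c (out ++ Γ) H) (hsub : ∀ f ∈ out, f ∈ Θ ++ Γ) :
    Der ok c (Θ ++ Γ) H := by
  have h1 : Der ok c (Θ ++ (out ++ Γ)) H := wk_all Θ h
  have h2 : Der ok c (out ++ (Θ ++ Γ)) H := by
    refine der_perm ?_ h1
    calc Θ ++ (out ++ Γ) ~ (Θ ++ out) ++ Γ := by rw [List.append_assoc]
      _ ~ (out ++ Θ) ++ Γ := List.Perm.append_right Γ (List.perm_append_comm)
      _ ~ out ++ (Θ ++ Γ) := by rw [List.append_assoc]
  exact absorb out hsub h2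

end Adm2

section Adm3

open List

variable {prec : Tm → Tm → Prop}

/-- Apply an "easy" pair to the succedent (one `=₁` or `=₂` inference). -/
lemma easyStep {π : Tm × Tm × Bool} (hπ : ¬ Hard prec π) (F : Fml) (x : Nat)
    {Θ : List Fml} (h : Der (semiOk prec) false Θ (F.subst x π.1)) :
    Der (semiOk prec) false (hypF π :: Θ) (F.subst x π.2.1) := by
  obtain ⟨r, s, o⟩ := π
  cases o with
  | false =>
    have hπ' : ¬ prec s r := fun hc => hπ (show Hard prec (r, s, false) from hc)
    exact Der.eq2 (show semiOk prec .r2 F x r s from hπ') h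
  | true =>
    have hπ' : prec r s := not_not.mp (fun hc => hπ (show Hard prec (r, s, true) from hc))
    exact Der.eq1 (show semiOk prec .r1 F x r s from hπ') h

/-- Rewrite a "hard" pair in the first context formula (one `=₁ˡ` or `=₂ˡ`). -/
lemma fixHyp {π : Tm × Tm × Bool} (hπ : Hard prec π) (F : Fml) (x : Nat)
    {Θ : List Fml} {G : Fml}
    (h : Der (semiOk prec) false ((F.subst x π.2.1) :: Θ) G) :
    Der (semiOk prec) false ((F.subst x π.1) :: hypF π :: Θ) G := by
  obtain ⟨r, s, o⟩ := π
  cases o with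
  | false =>
    exact Der.eq1l (show semiOk prec .l1 F x s r from hπ) h
  | true =>
    exact Der.eq2l (show semiOk prec .l2 F x s r from hπ) h

/-- Rewrite the node pair forward in the first context formula. -/
lemma nodeFix {r₀ s₀ : Tm} {b : Bool}
    (hnode : if b then prec r₀ s₀ else ¬ prec s₀ r₀) (F : Fml) (x : Nat)
    {Θ : List Fml} {G : Fml}
    (h : Der (semiOk prec) false ((F.subst x r₀) :: Θ) G) :
    Der (semiOk prec) false ((F.subst x s₀) :: hypF (r₀, s₀, b) :: Θ) G := by
  cases b with
  | false =>
    exact Der.eq2l (show semiOk prec .l2 F x r₀ s₀ from hnode) h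
  | true =>
    exact Der.eq1l (show semiOk prec .l1 F x r₀ s₀ from hnode) h

/-- Context rewrite of a single-pair replacement (hard pair). -/
lemma ctxStep {π : Tm × Tm × Bool} (hπ : Hard prec π) {X Y : Fml} {Θ : List Fml} {G : Fml}
    (hrep : RepF [π] X Y) (h : Der (semiOk prec) false (Y :: Θ) G) :
    Der (semiOk prec) false (X :: hypF π :: Θ) G := by
  obtain ⟨F, hF1, hF2⟩ := liftF hrep (fB X) le_rfl
  rw [← hF2] at h
  rw [← hF1]
  exact fixHyp hπ F _ h

/-- Succedent rewrite of a single-pair replacement (easy pair). -/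
lemma seqStep {π : Tm × Tm × Bool} (hπ : ¬ Hard prec π) {Z Z' : Fml} {Θ : List Fml}
    (hrep : RepF [π] Z Z') (h : Der (semiOk prec) false Θ Z) :
    Der (semiOk prec) false (hypF π :: Θ) Z' := by
  obtain ⟨F, hF1, hF2⟩ := liftF hrep (fB Z) le_rfl
  rw [← hF1] at h
  rw [← hF2]
  exact easyStep hπ F _ h

/-- Congruence: from `a = b` derive `p·a = p·b`. -/
lemma cong1 (a b : Tm) (p : List Nat) :
    Der (semiOk prec) false [.eq a b] (.eq (cat p a) (cat p b)) := by
  by_cases hp : prec a b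
  · -- =₁ with F := (p·a = p·x)
    set x := tB a with hx
    have h0 : Der (semiOk prec) false []
        ((Fml.eq (cat p a) (cat p (.var x))).subst x a) := by
      have : (Fml.eq (cat p a) (cat p (.var x))).subst x a = .eq (cat p a) (cat p a) := by
        simp [Fml.subst, subst_cat, subst_var, tsubst_noop (show tB a ≤ x from le_refl _)]
      rw [this]
      exact Der.refl (cat p a)
    have := Der.eq1 (show semiOk prec .r1 (Fml.eq (cat p a) (cat p (.var x))) x a b from hp) h0
    have he : (Fml.eq (cat p a) (cat p (.var x))).subst x b = .eq (cat p a) (cat p b) := by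
      simp [Fml.subst, subst_cat, subst_var, tsubst_noop (show tB a ≤ x from le_refl _)]
    rwa [he] at this
  · -- =₂ with F := (p·x = p·b), replacing b ↦ a backwards
    set x := tB b with hx
    have h0 : Der (semiOk prec) false []
        ((Fml.eq (cat p (.var x)) (cat p b)).subst x b) := by
      have : (Fml.eq (cat p (.var x)) (cat p b)).subst x b = .eq (cat p b) (cat p b) := by
        simp [Fml.subst, subst_cat, subst_var, tsubst_noop (show tB b ≤ x from le_refl _)]
      rw [this]
      exact Der.refl (cat p b)
    have := Der.eq2 (show semiOk prec .r2 (Fml.eq (cat p (.var x)) (cat p b)) x b a from hp) h0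
    have he : (Fml.eq (cat p (.var x)) (cat p b)).subst x a = .eq (cat p a) (cat p b) := by
      simp [Fml.subst, subst_cat, subst_var, tsubst_noop (show tB b ≤ x from le_refl _)]
    rwa [he] at this

/-- Congruence: from `a = b` derive `p·b = p·a`. -/
lemma cong2 (a b : Tm) (p : List Nat) :
    Der (semiOk prec) false [.eq a b] (.eq (cat p b) (cat p a)) := by
  by_cases hp : prec a b
  · set x := tB a with hx
    have h0 : Der (semiOk prec) false []
        ((Fml.eq (cat p (.var x)) (cat p a)).subst x a) := by
      have : (Fml.eq (cat p (.var x)) (cat p a)).subst x a = .eq (cat p a) (cat p a) := by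
        simp [Fml.subst, subst_cat, subst_var, tsubst_noop (show tB a ≤ x from le_refl _)]
      rw [this]
      exact Der.refl (cat p a)
    have := Der.eq1 (show semiOk prec .r1 (Fml.eq (cat p (.var x)) (cat p a)) x a b from hp) h0
    have he : (Fml.eq (cat p (.var x)) (cat p a)).subst x b = .eq (cat p b) (cat p a) := by
      simp [Fml.subst, subst_cat, subst_var, tsubst_noop (show tB a ≤ x from le_refl _)]
    rwa [he] at this
  · set x := tB b with hx
    have h0 : Der (semiOk prec) false []
        ((Fml.eq (cat p b) (cat p (.var x))).subst x b) := by
      have : (Fml.eq (cat p b) (cat p (.var x))).subst x b = .eq (cat p b) (cat p b) := by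
        simp [Fml.subst, subst_cat, subst_var, tsubst_noop (show tB b ≤ x from le_refl _)]
      rw [this]
      exact Der.refl (cat p b)
    have := Der.eq2 (show semiOk prec .r2 (Fml.eq (cat p b) (cat p (.var x))) x b a from hp) h0
    have he : (Fml.eq (cat p b) (cat p (.var x))).subst x a = .eq (cat p b) (cat p a) := by
      simp [Fml.subst, subst_cat, subst_var, tsubst_noop (show tB b ≤ x from le_refl _)]
    rwa [he] at this

end Adm3
section Adm4

open List

variable {prec : Tm → Tm → Prop}

/-- A chain of single-pair replacements, each pair satisfying `Q`. -/
inductive Chain (Q : Tm × Tm × Bool → Prop) : Fml → Fml → Prop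
  | nil {X} : Chain Q X X
  | cons {π X Y Z} : Q π → RepF [π] X Y → Chain Q Y Z → Chain Q X Z

lemma Chain.append {Q : Tm × Tm × Bool → Prop} :
    ∀ {X Y Z : Fml}, Chain Q X Y → Chain Q Y Z → Chain Q X Z := by
  intro X Y Z h1 h2
  induction h1 with
  | nil => exact h2
  | cons hq hrep _ IH => exact Chain.cons hq hrep (IH h2)

lemma Chain.lift {Q : Tm × Tm × Bool → Prop} {g : Fml → Fml}
    (hg : ∀ π (A B : Fml), RepF [π] A B → RepF [π] (g A) (g B)) :
    ∀ {X Y : Fml}, Chain Q X Y → Chain Q (g X) (g Y) := by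
  intro X Y h
  induction h with
  | nil => exact Chain.nil
  | cons hq hrep _ IH => exact Chain.cons hq (hg _ _ _ hrep) IH

/-- A one- or zero-step chain from a term replacement. -/
lemma chainT {L : List (Tm × Tm × Bool)} {Q : Tm × Tm × Bool → Prop}
    (hQ : ∀ π ∈ L, Q π) {t u : Tm} (h : RepT L t u) (g : Tm → Fml)
    (hg : ∀ π (a b : Tm), RepT [π] a b → RepF [π] (g a) (g b)) :
    Chain Q (g t) (g u) := by
  rcases h with rfl | ⟨π, hm, p, rfl, rfl⟩
  · exact Chain.nil
  · exact Chain.cons (hQ π hm)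
      (hg π _ _ (Or.inr ⟨π, List.mem_singleton_self π, p, rfl, rfl⟩)) Chain.nil

/-- Decompose a multi-pair replacement into a chain of single-pair steps. -/
lemma decompAll {L : List (Tm × Tm × Bool)} {Q : Tm × Tm × Bool → Prop}
    (hQ : ∀ π ∈ L, Q π) : ∀ {X Y : Fml}, RepF L X Y → Chain Q X Y := by
  intro X Y h
  induction h with
  | @eq t₁ t₂ u₁ u₂ h1 h2 =>
    exact Chain.append
      (chainT hQ h1 (fun a => .eq a t₂) (fun π a b hr => RepF.eq (by exact hr) (RepT.refl _ _)))
      (chainT hQ h2 (fun b => .eq u₁ b) (fun π a b hr => RepF.eq (RepT.refl _ _) (by exact hr)))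
  | @atom n t u h1 =>
    exact chainT hQ h1 (fun a => .atom n a) (fun π a b hr => RepF.atom n (by exact hr))
  | @imp A A' B B' _ _ IH1 IH2 =>
    exact Chain.append
      (Chain.lift (fun π X Y hr => RepF.imp hr (RepF.refl _ B)) IH1)
      (Chain.lift (fun π X Y hr => RepF.imp (RepF.refl _ A') hr) IH2)
  | @and A A' B B' _ _ IH1 IH2 =>
    exact Chain.append
      (Chain.lift (fun π X Y hr => RepF.and hr (RepF.refl _ B)) IH1)
      (Chain.lift (fun π X Y hr => RepF.and (RepF.refl _ A') hr) IH2)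
  | @or A A' B B' _ _ IH1 IH2 =>
    exact Chain.append
      (Chain.lift (fun π X Y hr => RepF.or hr (RepF.refl _ B)) IH1)
      (Chain.lift (fun π X Y hr => RepF.or (RepF.refl _ A') hr) IH2)
  | neg _ IH => exact Chain.lift (fun π X Y hr => RepF.neg hr) IH
  | all x _ IH => exact Chain.lift (fun π X Y hr => RepF.all x hr) IH
  | ex x _ IH => exact Chain.lift (fun π X Y hr => RepF.ex x hr) IH

/-- Split a multi-pair replacement into a hard part (single multi-replacement)
followed by a chain of easy single steps. -/
lemma decomp2 {L : List (Tm × Tm × Bool)} : ∀ {X Y : Fml}, RepF L X Y →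
    ∃ (Z : Fml) (hardL : List (Tm × Tm × Bool)),
      (∀ π ∈ hardL, π ∈ L ∧ Hard prec π) ∧ RepF hardL X Z ∧
      Chain (fun π => π ∈ L ∧ ¬ Hard prec π) Z Y := by
  intro X Y h
  induction h with
  | @eq t₁ t₂ u₁ u₂ h1 h2 =>
    -- handle each slot separately
    have slot : ∀ t u, RepT L t u → ∃ (z : Tm) (hL : List (Tm × Tm × Bool)),
        (∀ π ∈ hL, π ∈ L ∧ Hard prec π) ∧ RepT hL t z ∧
        (z = u ∨ ∃ π, (π ∈ L ∧ ¬ Hard prec π) ∧ RepT [π] z u) := by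
      intro t u h
      rcases h with rfl | ⟨π, hm, p, rfl, rfl⟩
      · exact ⟨t, [], by simp, RepT.refl _ _, Or.inl rfl⟩
      · by_cases hπ : Hard prec π
        · exact ⟨cat p π.2.1, [π], by simpa using ⟨hm, hπ⟩,
            Or.inr ⟨π, List.mem_singleton_self π, p, rfl, rfl⟩, Or.inl rfl⟩
        · exact ⟨cat p π.1, [], by simp, RepT.refl _ _,
            Or.inr ⟨π, ⟨hm, hπ⟩, Or.inr ⟨π, List.mem_singleton_self π, p, rfl, rfl⟩⟩⟩
    obtain ⟨z₁, hL₁, hh₁, hr₁, hc₁⟩ := slot t₁ u₁ h1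
    obtain ⟨z₂, hL₂, hh₂, hr₂, hc₂⟩ := slot t₂ u₂ h2
    refine ⟨.eq z₁ z₂, hL₁ ++ hL₂, ?_, ?_, ?_⟩
    · intro π hm; rcases List.mem_append.mp hm with hm | hm
      · exact hh₁ π hm
      · exact hh₂ π hm
    · exact RepF.eq (hr₁.mono (by intro π hm; exact List.mem_append.mpr (Or.inl hm)))
        (hr₂.mono (by intro π hm; exact List.mem_append.mpr (Or.inr hm)))
    · have step1 : Chain (fun π => π ∈ L ∧ ¬ Hard prec π) (.eq z₁ z₂) (.eq u₁ z₂) := by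
        rcases hc₁ with rfl | ⟨π, hπ, hrep⟩
        · exact Chain.nil
        · exact Chain.cons hπ (RepF.eq hrep (RepT.refl _ _)) Chain.nil
      have step2 : Chain (fun π => π ∈ L ∧ ¬ Hard prec π) (.eq u₁ z₂) (.eq u₁ u₂) := by
        rcases hc₂ with rfl | ⟨π, hπ, hrep⟩
        · exact Chain.nil
        · exact Chain.cons hπ (RepF.eq (RepT.refl _ _) hrep) Chain.nil
      exact step1.append step2
  | @atom n t u h1 =>
    rcases h1 with rfl | ⟨π, hm, p, rfl, rfl⟩
    · exact ⟨.atom n t, [], by simp, RepF.refl _ _, Chain.nil⟩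
    · by_cases hπ : Hard prec π
      · exact ⟨.atom n (cat p π.2.1), [π], by simpa using ⟨hm, hπ⟩,
          RepF.atom n (Or.inr ⟨π, List.mem_singleton_self π, p, rfl, rfl⟩), Chain.nil⟩
      · exact ⟨.atom n (cat p π.1), [], by simp, RepF.refl _ _,
          Chain.cons ⟨hm, hπ⟩
            (RepF.atom n (Or.inr ⟨π, List.mem_singleton_self π, p, rfl, rfl⟩)) Chain.nil⟩
  | @imp A A' B B' _ _ IH1 IH2 =>
    obtain ⟨Z₁, hL₁, hh₁, hr₁, hc₁⟩ := IH1
    obtain ⟨Z₂, hL₂, hh₂, hr₂, hc₂⟩ := IH2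
    refine ⟨.imp Z₁ Z₂, hL₁ ++ hL₂, ?_, ?_, ?_⟩
    · intro π hm; rcases List.mem_append.mp hm with hm | hm
      · exact hh₁ π hm
      · exact hh₂ π hm
    · exact RepF.imp (hr₁.mono (fun π hm => List.mem_append.mpr (Or.inl hm)))
        (hr₂.mono (fun π hm => List.mem_append.mpr (Or.inr hm)))
    · exact Chain.append
        (Chain.lift (fun π X Y hr => RepF.imp hr (RepF.refl _ Z₂)) hc₁)
        (Chain.lift (fun π X Y hr => RepF.imp (RepF.refl _ A') hr) hc₂)
  | @and A A' B B' _ _ IH1 IH2 =>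
    obtain ⟨Z₁, hL₁, hh₁, hr₁, hc₁⟩ := IH1
    obtain ⟨Z₂, hL₂, hh₂, hr₂, hc₂⟩ := IH2
    refine ⟨.and Z₁ Z₂, hL₁ ++ hL₂, ?_, ?_, ?_⟩
    · intro π hm; rcases List.mem_append.mp hm with hm | hm
      · exact hh₁ π hm
      · exact hh₂ π hm
    · exact RepF.and (hr₁.mono (fun π hm => List.mem_append.mpr (Or.inl hm)))
        (hr₂.mono (fun π hm => List.mem_append.mpr (Or.inr hm)))
    · exact Chain.append
        (Chain.lift (fun π X Y hr => RepF.and hr (RepF.refl _ Z₂)) hc₁)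
        (Chain.lift (fun π X Y hr => RepF.and (RepF.refl _ A') hr) hc₂)
  | @or A A' B B' _ _ IH1 IH2 =>
    obtain ⟨Z₁, hL₁, hh₁, hr₁, hc₁⟩ := IH1
    obtain ⟨Z₂, hL₂, hh₂, hr₂, hc₂⟩ := IH2
    refine ⟨.or Z₁ Z₂, hL₁ ++ hL₂, ?_, ?_, ?_⟩
    · intro π hm; rcases List.mem_append.mp hm with hm | hm
      · exact hh₁ π hm
      · exact hh₂ π hm
    · exact RepF.or (hr₁.mono (fun π hm => List.mem_append.mpr (Or.inl hm)))
        (hr₂.mono (fun π hm => List.mem_append.mpr (Or.inr hm)))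
    · exact Chain.append
        (Chain.lift (fun π X Y hr => RepF.or hr (RepF.refl _ Z₂)) hc₁)
        (Chain.lift (fun π X Y hr => RepF.or (RepF.refl _ A') hr) hc₂)
  | @neg A A' _ IH =>
    obtain ⟨Z, hL, hh, hr, hc⟩ := IH
    exact ⟨.neg Z, hL, hh, RepF.neg hr, Chain.lift (fun π X Y hr => RepF.neg hr) hc⟩
  | @all x A A' _ IH =>
    obtain ⟨Z, hL, hh, hr, hc⟩ := IH
    exact ⟨.all x Z, hL, hh, RepF.all x hr, Chain.lift (fun π X Y hr => RepF.all x hr) hc⟩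
  | @ex x A A' _ IH =>
    obtain ⟨Z, hL, hh, hr, hc⟩ := IH
    exact ⟨.ex x Z, hL, hh, RepF.ex x hr, Chain.lift (fun π X Y hr => RepF.ex x hr) hc⟩

/-- Fold an easy chain into successive succedent rewrites. -/
lemma foldSeq {Q : Tm × Tm × Bool → Prop} (hQ : ∀ π, Q π → ¬ Hard prec π) :
    ∀ {Z Y : Fml}, Chain Q Z Y → ∀ {Θ : List Fml}, Der (semiOk prec) false Θ Z →
      ∃ pend : List (Tm × Tm × Bool), (∀ π ∈ pend, Q π) ∧
        Der (semiOk prec) false (pend.map hypF ++ Θ) Y := by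
  intro Z Y hch
  induction hch with
  | nil => exact fun h => ⟨[], by simp, h⟩
  | @cons π X Y' Z' hq hrep _ IH =>
    intro Θ h
    have h1 := seqStep (hQ π hq) hrep h
    obtain ⟨pend, hp, hd⟩ := IH h1
    refine ⟨pend ++ [π], ?_, ?_⟩
    · intro ρ hm; rcases List.mem_append.mp hm with hm | hm
      · exact hp ρ hm
      · simp at hm; subst hm; exact hq
    · simpa [List.append_assoc] using hd

/-- Fold a hard chain into successive context rewrites (for the axiom case). -/
lemma foldCtx {Q : Tm × Tm × Bool → Prop} (hQ : ∀ π, Q π → Hard prec π) :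
    ∀ {X Y : Fml}, Chain Q X Y → ∀ {Θ : List Fml} {G : Fml},
      Der (semiOk prec) false (Y :: Θ) G →
      ∃ pend : List (Tm × Tm × Bool), (∀ π ∈ pend, Q π) ∧
        Der (semiOk prec) false (X :: pend.map hypF ++ Θ) G := by
  intro X Y hch
  induction hch with
  | nil => exact fun h => ⟨[], by simp, h⟩
  | @cons π X' Y' Z' hq hrep _ IH =>
    intro Θ G h
    obtain ⟨pend, hp, hd⟩ := IH h
    refine ⟨π :: pend, ?_, ?_⟩
    · intro ρ hm; rcases List.mem_cons.mp hm with rfl | hm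
      · exact hq
      · exact hp ρ hm
    · exact ctxStep (hQ π hq) hrep hd

end Adm4
section Adm5

open List

variable {prec : Tm → Tm → Prop}

/-- `decompose y x = some p` iff `x = cat p y`. -/
def decompose (y : Tm) : Tm → Option (List Nat)
  | .app f x => if Tm.app f x = y then some [] else (decompose y x).map (f :: ·)
  | x => if x = y then some [] else none

lemma decompose_sound {y : Tm} : ∀ {x : Tm} {p : List Nat},
    decompose y x = some p → x = cat p y := by
  intro x
  induction x with
  | var w =>
    intro p h
    simp only [decompose] at h
    split at h
    · next he => cases h; simpa using he
    · cases h
  | const c =>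
    intro p h
    simp only [decompose] at h
    split at h
    · next he => cases h; simpa using he
    · cases h
  | app f x IH =>
    intro p h
    simp only [decompose] at h
    split at h
    · next he => cases h; simpa using he
    · next he =>
      rcases Option.map_eq_some_iff.mp h with ⟨p', hp', rfl⟩
      simp [IH hp']

lemma decompose_complete (y : Tm) : ∀ (p : List Nat), decompose y (cat p y) = some p := by
  intro p
  induction p with
  | nil =>
    cases y <;> simp [decompose]
  | cons f p IH =>
    have hne : Tm.app f (cat p y) ≠ y := by
      intro h
      have := congrArg tlen h
      simp [tlen, tlen_cat] at this
      omega
    simp only [cat_cons, decompose, if_neg hne, IH, Option.map_some]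

/-- The residual pair of `π` over a node replacement `r₀ ↦ s₀`. -/
def spawn (r₀ s₀ : Tm) (b : Bool) (π : Tm × Tm × Bool) : Option (Tm × Tm × Bool) :=
  match decompose s₀ π.1 with
  | some p₂ => some (cat p₂ r₀, π.2.1, π.2.2)
  | none =>
    match decompose π.1 s₀ with
    | some q => some (r₀, cat q π.2.1, b)
    | none => none

def Lbig (L : List (Tm × Tm × Bool)) (r₀ s₀ : Tm) (b : Bool) : List (Tm × Tm × Bool) :=
  L ++ L.filterMap (spawn r₀ s₀ b) ++ [(r₀, s₀, b)]

lemma mem_Lbig_left {L r₀ s₀ b} {π} (h : π ∈ L) : π ∈ Lbig L r₀ s₀ b := by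
  simp [Lbig]; tauto

lemma mem_Lbig_node {L} (r₀ s₀ : Tm) (b : Bool) : (r₀, s₀, b) ∈ Lbig L r₀ s₀ b := by
  simp [Lbig]

lemma mem_Lbig_spawn {L r₀ s₀ b} {π π'} (h : π ∈ L) (hs : spawn r₀ s₀ b π = some π') :
    π' ∈ Lbig L r₀ s₀ b := by
  simp only [Lbig, List.mem_append]
  exact Or.inl (Or.inr (List.mem_filterMap.mpr ⟨π, h, hs⟩))

lemma splitT (L : List (Tm × Tm × Bool)) (r₀ s₀ : Tm) (b : Bool) (v₀ : Nat) :
    ∀ (t : Tm) {u' : Tm}, RepT L (Tm.subst v₀ s₀ t) u' →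
      RepT (Lbig L r₀ s₀ b) (Tm.subst v₀ r₀ t) u' := by
  intro t u' h
  rcases subst_decomp v₀ t with hn | ⟨p, rfl⟩
  · rw [hn] at h
    rw [hn]
    exact h.mono (fun π hm => mem_Lbig_left hm)
  · rw [subst_cat_var] at h
    rw [subst_cat_var]
    rcases h with heq | ⟨π, hm, p₁, h1, h2⟩
    · exact Or.inr ⟨(r₀, s₀, b), mem_Lbig_node r₀ s₀ b, p, rfl, heq.symm⟩
    · rcases tri h1 with ⟨w, hw, rfl⟩ | ⟨w, hw, rfl⟩
      · -- shape a/b : π.1 = cat w s₀, p = p₁ ++ w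
        have hsp : spawn r₀ s₀ b π = some (cat w r₀, π.2.1, π.2.2) := by
          simp [spawn, hw, decompose_complete]
        refine Or.inr ⟨(cat w r₀, π.2.1, π.2.2), mem_Lbig_spawn hm hsp, p₁, ?_, h2⟩
        rw [cat_append]
      · -- shape c : s₀ = cat w π.1, p₁ = p ++ w
        cases hde : decompose s₀ π.1 with
        | some w' =>
          have hs : π.1 = cat w' s₀ := decompose_sound hde
          rw [hw] at hs
          rw [← cat_append] at hs
          have : w' ++ w = [] := cat_eq_self hs.symm
          have hw' : w' = [] := by simpa using (List.append_eq_nil_iff.mp this).1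
          have hwnil : w = [] := by simpa using (List.append_eq_nil_iff.mp this).2
          subst hwnil
          have hsp : spawn r₀ s₀ b π = some (cat w' r₀, π.2.1, π.2.2) := by
            simp [spawn, hde]
          refine Or.inr ⟨(cat w' r₀, π.2.1, π.2.2), mem_Lbig_spawn hm hsp, p, ?_, ?_⟩
          · subst hw'; rfl
          · simpa using h2
        | none =>
          have hsp : spawn r₀ s₀ b π = some (r₀, cat w π.2.1, b) := by
            simp only [spawn, hde]
            rw [hw]
            simp [decompose_complete]
          refine Or.inr ⟨(r₀, cat w π.2.1, b), mem_Lbig_spawn hm hsp, p, rfl, ?_⟩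
          rw [h2, cat_append]

lemma splitF (L : List (Tm × Tm × Bool)) (r₀ s₀ : Tm) (b : Bool) (v₀ : Nat) :
    ∀ (F₀ : Fml) {H' : Fml}, RepF L (F₀.subst v₀ s₀) H' →
      RepF (Lbig L r₀ s₀ b) (F₀.subst v₀ r₀) H' := by
  intro F₀
  induction F₀ with
  | eq t u =>
    intro H' h
    simp only [Fml.subst] at h ⊢
    cases h with
    | eq h1 h2 => exact RepF.eq (splitT L r₀ s₀ b v₀ t h1) (splitT L r₀ s₀ b v₀ u h2)
  | atom n t =>
    intro H' h
    simp only [Fml.subst] at h ⊢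
    cases h with
    | atom _ h1 => exact RepF.atom n (splitT L r₀ s₀ b v₀ t h1)
  | imp A B IH1 IH2 =>
    intro H' h
    simp only [Fml.subst] at h ⊢
    cases h with
    | imp h1 h2 => exact RepF.imp (IH1 h1) (IH2 h2)
  | and A B IH1 IH2 =>
    intro H' h
    simp only [Fml.subst] at h ⊢
    cases h with
    | and h1 h2 => exact RepF.and (IH1 h1) (IH2 h2)
  | or A B IH1 IH2 =>
    intro H' h
    simp only [Fml.subst] at h ⊢
    cases h with
    | or h1 h2 => exact RepF.or (IH1 h1) (IH2 h2)
  | neg A IH =>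
    intro H' h
    simp only [Fml.subst] at h ⊢
    cases h with
    | neg h1 => exact RepF.neg (IH h1)
  | all x A IH =>
    intro H' h
    simp only [Fml.subst] at h ⊢
    by_cases hx : x = v₀
    · simp only [if_pos hx] at h ⊢
      cases h with
      | all _ h1 => exact RepF.all x (h1.mono (fun π hm => mem_Lbig_left hm))
    · simp only [if_neg hx] at h ⊢
      cases h with
      | all _ h1 => exact RepF.all x (IH h1)
  | ex x A IH =>
    intro H' h
    simp only [Fml.subst] at h ⊢
    by_cases hx : x = v₀
    · simp only [if_pos hx] at h ⊢
      cases h with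
      | ex _ h1 => exact RepF.ex x (h1.mono (fun π hm => mem_Lbig_left hm))
    · simp only [if_neg hx] at h ⊢
      cases h with
      | ex _ h1 => exact RepF.ex x (IH h1)

/-- Convert the hypothesis equation of a spawned pair into the parent pair's
hypothesis together with the node hypothesis. -/
lemma convert {r₀ s₀ : Tm} {b : Bool}
    (hnode : if b then prec r₀ s₀ else ¬ prec s₀ r₀)
    {π π' : Tm × Tm × Bool} (hπ : Hard prec π)
    (hsp : spawn r₀ s₀ b π = some π') {Θ : List Fml} {G : Fml}
    (h : Der (semiOk prec) false (hypF π' :: Θ) G) :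
    ∃ out : List Fml, (∀ f ∈ out, f = hypF π ∨ f = hypF (r₀, s₀, b)) ∧
      Der (semiOk prec) false (out ++ Θ) G := by
  obtain ⟨r, s, o⟩ := π
  unfold spawn at hsp
  cases hde : decompose s₀ r with
  | some p₂ =>
    rw [hde] at hsp
    simp only [Option.some.injEq] at hsp
    subst hsp
    have hr : r = cat p₂ s₀ := decompose_sound hde
    cases o with
    | true =>
      -- hyp π' = .eq (cat p₂ r₀) s ; F := .eq (cat p₂ (var x)) s with x := tB s
      set x := tB s with hxdef
      set F : Fml := .eq (cat p₂ (.var x)) s with hF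
      have e1 : F.subst x r₀ = hypF (cat p₂ r₀, s, true) := by
        simp [hF, hypF, Fml.subst, subst_cat_var, tsubst_noop (show tB s ≤ x from le_refl _)]
      have e2 : F.subst x s₀ = hypF (r, s, true) := by
        simp [hF, hypF, Fml.subst, subst_cat_var, tsubst_noop (show tB s ≤ x from le_refl _), hr]
      rw [← e1] at h
      have := nodeFix hnode F x h
      rw [e2] at this
      exact ⟨[hypF (r, s, true), hypF (r₀, s₀, b)], by simp, this⟩
    | false =>
      set x := tB s with hxdef
      set F : Fml := .eq s (cat p₂ (.var x)) with hF
      have e1 : F.subst x r₀ = hypF (cat p₂ r₀, s, false) := by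
        simp [hF, hypF, Fml.subst, subst_cat_var, tsubst_noop (show tB s ≤ x from le_refl _)]
      have e2 : F.subst x s₀ = hypF (r, s, false) := by
        simp [hF, hypF, Fml.subst, subst_cat_var, tsubst_noop (show tB s ≤ x from le_refl _), hr]
      rw [← e1] at h
      have := nodeFix hnode F x h
      rw [e2] at this
      exact ⟨[hypF (r, s, false), hypF (r₀, s₀, b)], by simp, this⟩
  | none =>
    rw [hde] at hsp
    cases hde2 : decompose r s₀ with
    | some q =>
      rw [hde2] at hsp
      simp only [Option.some.injEq] at hsp
      subst hsp
      have hs : s₀ = cat q r := decompose_sound hde2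
      set x := tB r₀ with hxdef
      cases b with
      | true =>
        -- π' = (r₀, cat q s, true): hyp π' = .eq r₀ (cat q s); F := .eq r₀ (cat q (var x))
        set F : Fml := .eq r₀ (cat q (.var x)) with hF
        have e1 : F.subst x s = hypF (r₀, cat q s, true) := by
          simp [hF, hypF, Fml.subst, subst_cat_var, tsubst_noop (show tB r₀ ≤ x from le_refl _)]
        have e2 : F.subst x r = hypF (r₀, s₀, true) := by
          simp [hF, hypF, Fml.subst, subst_cat_var, tsubst_noop (show tB r₀ ≤ x from le_refl _), hs]
        rw [← e1] at h
        have := fixHyp (π := (r, s, o)) hπ F x h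
        rw [e2] at this
        exact ⟨[hypF (r₀, s₀, true), hypF (r, s, o)], by simp, this⟩
      | false =>
        set F : Fml := .eq (cat q (.var x)) r₀ with hF
        have e1 : F.subst x s = hypF (r₀, cat q s, false) := by
          simp [hF, hypF, Fml.subst, subst_cat_var, tsubst_noop (show tB r₀ ≤ x from le_refl _)]
        have e2 : F.subst x r = hypF (r₀, s₀, false) := by
          simp [hF, hypF, Fml.subst, subst_cat_var, tsubst_noop (show tB r₀ ≤ x from le_refl _), hs]
        rw [← e1] at h
        have := fixHyp (π := (r, s, o)) hπ F x h
        rw [e2] at this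
        exact ⟨[hypF (r₀, s₀, false), hypF (r, s, o)], by simp, this⟩
    | none =>
      rw [hde2] at hsp
      cases hsp

/-- Convert a whole list of pending hypotheses. -/
lemma convList {r₀ s₀ : Tm} {b : Bool} {L : List (Tm × Tm × Bool)}
    (hnode : if b then prec r₀ s₀ else ¬ prec s₀ r₀)
    (hL : ∀ π ∈ L, Hard prec π) :
    ∀ (pend : List (Tm × Tm × Bool)), (∀ π ∈ pend, π ∈ Lbig L r₀ s₀ b) →
      ∀ {Θ : List Fml} {G : Fml},
      Der (semiOk prec) false (pend.map hypF ++ Θ) G →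
      ∃ out : List Fml,
        (∀ f ∈ out, f ∈ L.map hypF ∨ f = hypF (r₀, s₀, b)) ∧
        Der (semiOk prec) false (out ++ Θ) G := by
  intro pend
  induction pend with
  | nil =>
    intro _ Θ G h
    exact ⟨[], by simp, h⟩
  | cons π pend IH =>
    intro hmem Θ G h
    -- first deal with π (at the front)
    have hπLb : π ∈ Lbig L r₀ s₀ b := hmem π List.mem_cons_self
    have step : ∃ out₁ : List Fml,
        (∀ f ∈ out₁, f ∈ L.map hypF ∨ f = hypF (r₀, s₀, b)) ∧
        Der (semiOk prec) false (out₁ ++ (pend.map hypF ++ Θ)) G := by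
      simp only [Lbig, List.mem_append, List.mem_singleton] at hπLb
      rcases hπLb with (hm | hm) | hm
      · refine ⟨[hypF π], ?_, by simpa using h⟩
        intro f hf
        simp only [List.mem_singleton] at hf
        subst hf
        exact Or.inl (List.mem_map.mpr ⟨π, hm, rfl⟩)
      · obtain ⟨ρ, hρ, hsp⟩ := List.mem_filterMap.mp hm
        obtain ⟨out₁, ho, hd⟩ := convert hnode (hL ρ hρ) hsp (by simpa using h)
        refine ⟨out₁, ?_, hd⟩
        intro f hf
        rcases ho f hf with rfl | rfl
        · exact Or.inl (List.mem_map.mpr ⟨ρ, hρ, rfl⟩)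
        · exact Or.inr rfl
      · subst hm
        exact ⟨[hypF (r₀, s₀, b)], by simp, by simpa using h⟩
    obtain ⟨out₁, ho₁, hd₁⟩ := step
    have hd₂ : Der (semiOk prec) false (pend.map hypF ++ (out₁ ++ Θ)) G := by
      refine der_perm ?_ hd₁
      calc out₁ ++ (pend.map hypF ++ Θ) ~ (out₁ ++ pend.map hypF) ++ Θ := by
            rw [List.append_assoc]
        _ ~ (pend.map hypF ++ out₁) ++ Θ := List.Perm.append_right Θ List.perm_append_comm
        _ ~ pend.map hypF ++ (out₁ ++ Θ) := by rw [List.append_assoc]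
    obtain ⟨out₂, ho₂, hd₃⟩ := IH (fun ρ hm => hmem ρ (List.mem_cons_of_mem π hm)) hd₂
    refine ⟨out₂ ++ out₁, ?_, by simpa [List.append_assoc] using hd₃⟩
    intro f hf
    rcases List.mem_append.mp hf with hf | hf
    · exact ho₂ f hf
    · exact ho₁ f hf

end Adm5
section Adm6

open List

variable {prec : Tm → Tm → Prop}

lemma cleanup0 {ok : EqRule → Fml → Nat → Tm → Tm → Prop} {c : Bool}
    {out Θ : List Fml} {H : Fml}
    (h : Der ok c out H) (hsub : ∀ f ∈ out, f ∈ Θ) : Der ok c Θ H := by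
  have h1 := wk_all Θ h
  have h2 : Der ok c (out ++ Θ) H := der_perm List.perm_append_comm h1
  exact absorb out hsub h2

/-- The refl-axiom case of the main induction. -/
lemma reflCase {L : List (Tm × Tm × Bool)}
    (hL : ∀ π ∈ L, Hard prec π) {t u₁ u₂ : Tm}
    (h1 : RepT L t u₁) (h2 : RepT L t u₂) :
    Der (semiOk prec) false (L.map hypF) (.eq u₁ u₂) := by
  rcases h1 with rfl | ⟨π₁, hm₁, p₁, rfl, rfl⟩
  · rcases h2 with rfl | ⟨π₂, hm₂, p₂, rfl, rfl⟩
    · exact cleanup0 (Der.refl _) (by simp)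
    · obtain ⟨r, s, o⟩ := π₂
      cases o with
      | true =>
        refine cleanup0 (cong1 r s p₂) ?_
        intro f hf
        simp only [List.mem_singleton] at hf
        subst hf
        exact List.mem_map.mpr ⟨(r, s, true), hm₂, rfl⟩
      | false =>
        refine cleanup0 (cong2 s r p₂) ?_
        intro f hf
        simp only [List.mem_singleton] at hf
        subst hf
        exact List.mem_map.mpr ⟨(r, s, false), hm₂, rfl⟩
  · rcases h2 with heq | ⟨π₂, hm₂, p₂, hteq, rfl⟩
    · -- u₂ = cat p₁ π₁.1
      rw [← heq]
      obtain ⟨r, s, o⟩ := π₁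
      cases o with
      | true =>
        refine cleanup0 (cong2 r s p₁) ?_
        intro f hf
        simp only [List.mem_singleton] at hf
        subst hf
        exact List.mem_map.mpr ⟨(r, s, true), hm₁, rfl⟩
      | false =>
        refine cleanup0 (cong1 s r p₁) ?_
        intro f hf
        simp only [List.mem_singleton] at hf
        subst hf
        exact List.mem_map.mpr ⟨(r, s, false), hm₁, rfl⟩
    · -- both slots marked
      have hπ₁ := hL π₁ hm₁
      have hπ₂ := hL π₂ hm₂
      obtain ⟨r₁, s₁, o₁⟩ := π₁
      obtain ⟨r₂, s₂, o₂⟩ := π₂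
      rcases tri hteq with ⟨w, hw, rfl⟩ | ⟨w, hw, rfl⟩
      · -- r₂ = cat w r₁ ; p₁ = p₂ ++ w ; π₁ inner, π₂ outer
        -- u₁ = cat p₂ (cat w s₁), u₂ = cat p₂ s₂
        have hu1 : cat (p₂ ++ w) s₁ = cat p₂ (cat w s₁) := cat_append _ _ _
        rw [hu1]
        cases o₂ with
        | true =>
          set x := tB s₂ with hx
          set F : Fml := .eq (cat w (.var x)) s₂ with hF
          have base : Der (semiOk prec) false [F.subst x s₁]
              (.eq (cat p₂ (cat w s₁)) (cat p₂ s₂)) := by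
            have e : F.subst x s₁ = .eq (cat w s₁) s₂ := by
              simp [hF, Fml.subst, subst_cat_var, tsubst_noop (show tB s₂ ≤ x from le_refl _)]
            rw [e]
            exact cong1 (cat w s₁) s₂ p₂
          have step := fixHyp (π := (r₁, s₁, o₁)) hπ₁ F x base
          have e2 : F.subst x r₁ = hypF (r₂, s₂, true) := by
            simp [hF, hypF, Fml.subst, subst_cat_var, tsubst_noop (show tB s₂ ≤ x from le_refl _), ← hw]
          rw [e2] at step
          refine cleanup0 step ?_
          intro f hf
          simp only [List.mem_cons, List.mem_singleton] at hf
          rcases hf with rfl | rfl | hf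
          · exact List.mem_map.mpr ⟨(r₂, s₂, true), hm₂, rfl⟩
          · exact List.mem_map.mpr ⟨(r₁, s₁, o₁), hm₁, rfl⟩
          · exact absurd hf (by simp)
        | false =>
          set x := tB s₂ with hx
          set F : Fml := .eq s₂ (cat w (.var x)) with hF
          have base : Der (semiOk prec) false [F.subst x s₁]
              (.eq (cat p₂ (cat w s₁)) (cat p₂ s₂)) := by
            have e : F.subst x s₁ = .eq s₂ (cat w s₁) := by
              simp [hF, Fml.subst, subst_cat_var, tsubst_noop (show tB s₂ ≤ x from le_refl _)]
            rw [e]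
            exact cong2 s₂ (cat w s₁) p₂
          have step := fixHyp (π := (r₁, s₁, o₁)) hπ₁ F x base
          have e2 : F.subst x r₁ = hypF (r₂, s₂, false) := by
            simp [hF, hypF, Fml.subst, subst_cat_var, tsubst_noop (show tB s₂ ≤ x from le_refl _), ← hw]
          rw [e2] at step
          refine cleanup0 step ?_
          intro f hf
          simp only [List.mem_cons, List.mem_singleton] at hf
          rcases hf with rfl | rfl | hf
          · exact List.mem_map.mpr ⟨(r₂, s₂, false), hm₂, rfl⟩
          · exact List.mem_map.mpr ⟨(r₁, s₁, o₁), hm₁, rfl⟩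
          · exact absurd hf (by simp)
      · -- r₁ = cat w r₂ ; p₂ = p₁ ++ w ; π₂ inner, π₁ outer
        have hu2 : cat (p₁ ++ w) s₂ = cat p₁ (cat w s₂) := cat_append _ _ _
        rw [hu2]
        cases o₁ with
        | true =>
          set x := tB s₁ with hx
          set F : Fml := .eq (cat w (.var x)) s₁ with hF
          have base : Der (semiOk prec) false [F.subst x s₂]
              (.eq (cat p₁ s₁) (cat p₁ (cat w s₂))) := by
            have e : F.subst x s₂ = .eq (cat w s₂) s₁ := by
              simp [hF, Fml.subst, subst_cat_var, tsubst_noop (show tB s₁ ≤ x from le_refl _)]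
            rw [e]
            exact cong2 (cat w s₂) s₁ p₁
          have step := fixHyp (π := (r₂, s₂, o₂)) hπ₂ F x base
          have e2 : F.subst x r₂ = hypF (r₁, s₁, true) := by
            simp [hF, hypF, Fml.subst, subst_cat_var, tsubst_noop (show tB s₁ ≤ x from le_refl _), ← hw]
          rw [e2] at step
          refine cleanup0 step ?_
          intro f hf
          simp only [List.mem_cons, List.mem_singleton] at hf
          rcases hf with rfl | rfl | hf
          · exact List.mem_map.mpr ⟨(r₁, s₁, true), hm₁, rfl⟩
          · exact List.mem_map.mpr ⟨(r₂, s₂, o₂), hm₂, rfl⟩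
          · exact absurd hf (by simp)
        | false =>
          set x := tB s₁ with hx
          set F : Fml := .eq s₁ (cat w (.var x)) with hF
          have base : Der (semiOk prec) false [F.subst x s₂]
              (.eq (cat p₁ s₁) (cat p₁ (cat w s₂))) := by
            have e : F.subst x s₂ = .eq s₁ (cat w s₂) := by
              simp [hF, Fml.subst, subst_cat_var, tsubst_noop (show tB s₁ ≤ x from le_refl _)]
            rw [e]
            exact cong1 s₁ (cat w s₂) p₁
          have step := fixHyp (π := (r₂, s₂, o₂)) hπ₂ F x base
          have e2 : F.subst x r₂ = hypF (r₁, s₁, false) := by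
            simp [hF, hypF, Fml.subst, subst_cat_var, tsubst_noop (show tB s₁ ≤ x from le_refl _), ← hw]
          rw [e2] at step
          refine cleanup0 step ?_
          intro f hf
          simp only [List.mem_cons, List.mem_singleton] at hf
          rcases hf with rfl | rfl | hf
          · exact List.mem_map.mpr ⟨(r₁, s₁, false), hm₁, rfl⟩
          · exact List.mem_map.mpr ⟨(r₂, s₂, o₂), hm₂, rfl⟩
          · exact absurd hf (by simp)

/-- The case of the main induction for a succedent equality rule. -/
lemma nodeCase {r₀ s₀ : Tm} {b : Bool}
    (hnode : if b then prec r₀ s₀ else ¬ prec s₀ r₀)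
    {Γ : List Fml} {F₀ : Fml} {v₀ : Nat}
    (IH : ∀ (L' : List (Tm × Tm × Bool)) (H'' : Fml), (∀ π ∈ L', Hard prec π) →
      RepF L' (F₀.subst v₀ r₀) H'' →
      Der (semiOk prec) false (L'.map hypF ++ Γ) H'')
    {L : List (Tm × Tm × Bool)} {H' : Fml}
    (hL : ∀ π ∈ L, Hard prec π) (hrep : RepF L (F₀.subst v₀ s₀) H') :
    Der (semiOk prec) false (L.map hypF ++ hypF (r₀, s₀, b) :: Γ) H' := by
  have hsplit := splitF L r₀ s₀ b v₀ F₀ hrep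
  obtain ⟨Z, hardL, hhard, hZ, hchain⟩ := decomp2 (prec := prec) hsplit
  have h1 := IH hardL Z (fun π hm => (hhard π hm).2) hZ
  obtain ⟨pendE, hpQ, h2⟩ := foldSeq (fun π hq => hq.2) hchain h1
  have h3 : Der (semiOk prec) false ((pendE ++ hardL).map hypF ++ Γ) H' := by
    simpa [List.map_append, List.append_assoc] using h2
  have hmem : ∀ π ∈ pendE ++ hardL, π ∈ Lbig L r₀ s₀ b := by
    intro π hm
    rcases List.mem_append.mp hm with hm | hm
    · exact (hpQ π hm).1
    · exact (hhard π hm).1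
  obtain ⟨out, hout, h4⟩ := convList hnode hL (pendE ++ hardL) hmem h3
  have h5 : Der (semiOk prec) false ((L.map hypF ++ [hypF (r₀, s₀, b)]) ++ Γ) H' := by
    refine cleanup2 h4 ?_
    intro f hf
    rcases hout f hf with hf' | rfl
    · exact List.mem_append.mpr (Or.inl (List.mem_append.mpr (Or.inl hf')))
    · exact List.mem_append.mpr (Or.inl (List.mem_append.mpr (Or.inr (by simp))))
  simpa [List.append_assoc] using h5

/-- Core lemma: multi-pair replacement admissibility. -/
lemma core {Δ : List Fml} {H : Fml}
    (h : Der (semiOk prec) false Δ H) :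
    ∀ (L : List (Tm × Tm × Bool)) (H' : Fml), (∀ π ∈ L, Hard prec π) →
      RepF L H H' → Der (semiOk prec) false (L.map hypF ++ Δ) H' := by
  induction h with
  | ax F₁ =>
    intro L H' hL hrep
    have hch : Chain (fun π => π ∈ L ∧ Hard prec π) F₁ H' :=
      decompAll (fun π hm => ⟨hm, hL π hm⟩) hrep
    obtain ⟨pend, hp, h1⟩ := foldCtx (fun π hq => hq.2) hch (Θ := []) (Der.ax H')
    have h2 : Der (semiOk prec) false (F₁ :: pend.map hypF) H' := by simpa using h1
    have h3 : Der (semiOk prec) false (pend.map hypF ++ [F₁]) H' :=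
      der_perm (List.perm_append_singleton F₁ (pend.map hypF)).symm h2
    refine cleanup2 h3 ?_
    intro f hf
    obtain ⟨π, hπ, rfl⟩ := List.mem_map.mp hf
    exact List.mem_append.mpr (Or.inl (List.mem_map.mpr ⟨π, (hp π hπ).1, rfl⟩))
  | refl t =>
    intro L H' hL hrep
    cases hrep with
    | eq h1 h2 => simpa using reflCase hL h1 h2
  | wk F _ IH =>
    intro L H' hL hrep
    exact der_perm List.perm_middle.symm (Der.wk F (IH L H' hL hrep))
  | @exch Γ₁ Γ₂ Fm G Hh _ IH =>
    intro L H' hL hrep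
    have h1 := IH L H' hL hrep
    have h2 : Der (semiOk prec) false ((L.map hypF ++ Γ₁) ++ Fm :: G :: Γ₂) H' := by
      simpa [List.append_assoc] using h1
    have h3 := Der.exch h2
    simpa [List.append_assoc] using h3
  | @contr Γ Fm Hh _ IH =>
    intro L H' hL hrep
    have h1 := IH L H' hL hrep
    have h2 : Der (semiOk prec) false (Fm :: Fm :: (L.map hypF ++ Γ)) H' := by
      refine der_perm ?_ h1
      calc L.map hypF ++ Fm :: (Fm :: Γ) ~ Fm :: (L.map hypF ++ Fm :: Γ) :=
            List.perm_middle
        _ ~ Fm :: Fm :: (L.map hypF ++ Γ) := List.Perm.cons Fm List.perm_middle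
    have h3 := Der.contr h2
    exact der_perm List.perm_middle.symm h3
  | cutr hcut _ _ _ _ =>
    exact absurd hcut (by simp)
  | @eq1 Γ F₀ v₀ r₀ s₀ hok _ IH =>
    intro L H' hL hrep
    exact nodeCase (b := true) hok IH hL hrep
  | @eq2 Γ F₀ v₀ r₀ s₀ hok _ IH =>
    intro L H' hL hrep
    exact nodeCase (b := false) hok IH hL hrep
  | @eq1l Γ F₀ v₀ r₀ s₀ Hh hok _ IH =>
    intro L H' hL hrep
    have h1 := IH L H' hL hrep
    have h2 : Der (semiOk prec) false (F₀.subst v₀ r₀ :: (L.map hypF ++ Γ)) H' :=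
      der_perm List.perm_middle h1
    have h3 := Der.eq1l hok h2
    refine der_perm ?_ h3
    calc F₀.subst v₀ s₀ :: .eq r₀ s₀ :: (L.map hypF ++ Γ)
        ~ F₀.subst v₀ s₀ :: (L.map hypF ++ .eq r₀ s₀ :: Γ) :=
          List.Perm.cons _ List.perm_middle.symm
      _ ~ L.map hypF ++ F₀.subst v₀ s₀ :: .eq r₀ s₀ :: Γ := List.perm_middle.symm
  | @eq2l Γ F₀ v₀ r₀ s₀ Hh hok _ IH =>
    intro L H' hL hrep
    have h1 := IH L H' hL hrep
    have h2 : Der (semiOk prec) false (F₀.subst v₀ r₀ :: (L.map hypF ++ Γ)) H' :=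
      der_perm List.perm_middle h1
    have h3 := Der.eq2l hok h2
    refine der_perm ?_ h3
    calc F₀.subst v₀ s₀ :: .eq s₀ r₀ :: (L.map hypF ++ Γ)
        ~ F₀.subst v₀ s₀ :: (L.map hypF ++ .eq s₀ r₀ :: Γ) :=
          List.Perm.cons _ List.perm_middle.symm
      _ ~ L.map hypF ++ F₀.subst v₀ s₀ :: .eq s₀ r₀ :: Γ := List.perm_middle.symm
  | cng hok _ _ _ _ =>
    exact hok.elim

end Adm6
/-- Semishortening admissibility: for any antireflexive relation `≺` on terms
(`r ≺ s` entails `s ⊀ r`), if `Γ ⇒ F{v/r}` has a cut-free semishortening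
derivation in `EQ₁₂`, then for every term `s` both `Γ, r=s ⇒ F{v/s}` and
`Γ, s=r ⇒ F{v/s}` have cut-free semishortening derivations. -/
theorem semishortening_admissibility (prec : Tm → Tm → Prop)
    (hprec : ∀ r s, prec r s → ¬ prec s r)
    (Γ : List Fml) (F : Fml) (v : Nat) (r : Tm)
    (h : Der (semiOk prec) false Γ (F.subst v r)) :
    ∀ s : Tm,
      Der (semiOk prec) false (.eq r s :: Γ) (F.subst v s) ∧
      Der (semiOk prec) false (.eq s r :: Γ) (F.subst v s) := by
  intro s
  constructor
  · by_cases hp : prec r s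
    · exact Der.eq1 hp h
    · have := core h [(r, s, true)] (F.subst v s)
        (by
          intro π hm
          simp only [List.mem_singleton] at hm
          subst hm
          exact hp)
        (bridgeF (r, s, true) v F)
      simpa [hypF] using this
  · by_cases hp : prec s r
    · have := core h [(r, s, false)] (F.subst v s)
        (by
          intro π hm
          simp only [List.mem_singleton] at hm
          subst hm
          exact hp)
        (bridgeF (r, s, false) v F)
      simpa [hypF] using this
    · exact Der.eq2 hp h
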